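/- Let A be the adjacency matrix of a tournament Γ on n vertices, and set S = 2A + I - J. Then Γ is doubly regular (every vertex has in-degree and out-degree (n-1)/2, and each pair of distinct vertices has exactly (n-3)/4 common out-neighbors and (n-3)/4 common in-neighbors) if and only if S·Sᵀ = nI - J. -/

import Mathlib

open Finset

private lemma sumS {V : Type*} [Fintype V] [DecidableEq V] (B : Matrix V V ℤ) (x y : V) :
    ∑ z, (2 * B x z + (if x = z then (1:ℤ) else 0) - 1) *
          (2 * B y z + (if y = z then (1:ℤ) else 0) - 1)
    = 4 * (∑ z, B x z * B y z) + 2 * B x y + 2 * B y x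
      - 2 * (∑ z, B x z) - 2 * (∑ z, B y z)
      + (if x = y then 1 else 0) + (Fintype.card V : ℤ) - 2 := by
  have hterm : ∀ z, (2 * B x z + (if x = z then (1:ℤ) else 0) - 1) *
          (2 * B y z + (if y = z then (1:ℤ) else 0) - 1)
      = 4 * (B x z * B y z) + 2 * (if y = z then B x z else 0)
        + 2 * (if x = z then B y z else 0)
        + (if x = z then (if y = z then (1:ℤ) else 0) else 0)
        - 2 * B x z - 2 * B y z - (if x = z then (1:ℤ) else 0)
        - (if y = z then (1:ℤ) else 0) + 1 := by
    intro z
    by_cases h1 : x = z <;> by_cases h2 : y = z <;> simp [h1, h2] <;> ring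
  rw [Finset.sum_congr rfl fun z _ => hterm z]
  have h1 : (if y = x then (1:ℤ) else 0) = if x = y then 1 else 0 := by
    by_cases h : x = y <;> simp [h, eq_comm]
  simp only [Finset.sum_add_distrib, Finset.sum_sub_distrib, ← Finset.mul_sum,
    Finset.sum_ite_eq, Finset.mem_univ, if_true, Finset.sum_const, Finset.card_univ,
    nsmul_eq_mul, mul_one, h1]
  ring


/-- Let `A` be the adjacency matrix of a tournament on `n` vertices and
`S = 2A + I - J`. The tournament is doubly regular (every vertex has in- and out-degree
`(n-1)/2` and every pair of distinct vertices has `(n-3)/4` common out-neighbors and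
`(n-3)/4` common in-neighbors) if and only if `S·Sᵀ = nI - J`. -/
theorem stmt_10 {V : Type*} [Fintype V] [DecidableEq V]
    (n : ℕ) (hn : Fintype.card V = n)
    (A : Matrix V V ℤ)
    (h01 : ∀ x y, A x y = 0 ∨ A x y = 1)
    (hdiag : ∀ x, A x x = 0)
    (htour : A + A.transpose = (Matrix.of fun _ _ => (1 : ℤ)) - 1) :
    ((∀ x, 2 * (∑ z, A x z) = (n : ℤ) - 1 ∧ 2 * (∑ z, A z x) = (n : ℤ) - 1) ∧
     (∀ x y, x ≠ y →
        4 * (∑ z, A x z * A y z) = (n : ℤ) - 3 ∧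
        4 * (∑ z, A z x * A z y) = (n : ℤ) - 3)) ↔
    ((2 : ℤ) • A + 1 - Matrix.of fun _ _ => (1 : ℤ)) *
        ((2 : ℤ) • A + 1 - Matrix.of fun _ _ => (1 : ℤ)).transpose =
      (n : ℤ) • (1 : Matrix V V ℤ) - Matrix.of fun _ _ => (1 : ℤ) := by
  subst hn
  set N : ℤ := (Fintype.card V : ℤ) with hN
  have hpair : ∀ x y : V, x ≠ y → A x y + A y x = 1 := by
    intro x y hxy
    have := congrFun (congrFun htour x) y
    simpa [Matrix.add_apply, Matrix.sub_apply, Matrix.transpose_apply,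
      Matrix.one_apply, hxy] using this
  -- entry form of the LHS matrix product
  have hSmul : ∀ x y : V,
      ((((2 : ℤ) • A + 1 - Matrix.of fun _ _ => (1 : ℤ)) *
        ((2 : ℤ) • A + 1 - Matrix.of fun _ _ => (1 : ℤ)).transpose : Matrix V V ℤ)) x y
      = ∑ z, (2 * A x z + (if x = z then (1:ℤ) else 0) - 1) *
              (2 * A y z + (if y = z then (1:ℤ) else 0) - 1) := by
    intro x y
    simp only [Matrix.mul_apply, Matrix.add_apply, Matrix.sub_apply, Matrix.smul_apply,
      Matrix.transpose_apply, Matrix.one_apply, Matrix.of_apply]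
    simp only [smul_eq_mul]
  have hRHS : ∀ x y : V,
      (((N : ℤ) • (1 : Matrix V V ℤ) - Matrix.of fun _ _ => (1 : ℤ) : Matrix V V ℤ)) x y
      = (if x = y then N else 0) - 1 := by
    intro x y
    by_cases h : x = y <;>
    · simp only [Matrix.sub_apply, Matrix.smul_apply, Matrix.one_apply, Matrix.of_apply, h,
        if_true, if_false]
      simp
  have hsq : ∀ x : V, ∑ z, A x z * A x z = ∑ z, A x z := by
    intro x
    exact Finset.sum_congr rfl fun z _ => by rcases h01 x z with h | h <;> simp [h]
  have hrc : ∀ x : V, (∑ z, A x z) + (∑ z, A z x) = N - 1 := by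
    intro x
    have h1 : ∀ z, A x z + A z x = 1 - (if x = z then (1:ℤ) else 0) := by
      intro z
      by_cases h : x = z
      · subst h; simp [hdiag x]
      · simp [h, hpair x z h]
    calc (∑ z, A x z) + (∑ z, A z x) = ∑ z, (A x z + A z x) := by
          rw [Finset.sum_add_distrib]
      _ = ∑ z, (1 - (if x = z then (1:ℤ) else 0)) :=
          Finset.sum_congr rfl fun z _ => h1 z
      _ = N - 1 := by
          simp [Finset.sum_sub_distrib, Finset.sum_ite_eq, Finset.card_univ, hN]
  constructor
  · rintro ⟨hreg, hcom⟩
    ext x y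
    rw [hSmul x y, hRHS x y, sumS A x y]
    by_cases hxy : x = y
    · subst hxy
      rw [hsq x]
      simp only [hdiag x, if_true]
      ring
    · have h1 := (hreg x).1
      have h2 := (hreg y).1
      have h3 := (hcom x y hxy).1
      have h4 := hpair x y hxy
      simp only [hxy, if_false]
      linarith
  · intro hM
    have he : ∀ x y : V,
        ∑ z, (2 * A x z + (if x = z then (1:ℤ) else 0) - 1) *
              (2 * A y z + (if y = z then (1:ℤ) else 0) - 1)
        = (if x = y then N else 0) - 1 := by
      intro x y
      rw [← hSmul x y, hM, hRHS x y]
    -- column sums of S are zero (Gram argument)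
    have hgram : ∑ z, (∑ x, (2 * A x z + (if x = z then (1:ℤ) else 0) - 1)) *
        (∑ x, (2 * A x z + (if x = z then (1:ℤ) else 0) - 1)) = 0 := by
      calc ∑ z, (∑ x, (2 * A x z + (if x = z then (1:ℤ) else 0) - 1)) *
              (∑ x, (2 * A x z + (if x = z then (1:ℤ) else 0) - 1))
          = ∑ z, ∑ x, ∑ y, (2 * A x z + (if x = z then (1:ℤ) else 0) - 1) *
              (2 * A y z + (if y = z then (1:ℤ) else 0) - 1) := by
            refine Finset.sum_congr rfl fun z _ => ?_
            rw [Finset.sum_mul]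
            exact Finset.sum_congr rfl fun x _ => Finset.mul_sum _ _ _
        _ = ∑ x, ∑ y, ∑ z, (2 * A x z + (if x = z then (1:ℤ) else 0) - 1) *
              (2 * A y z + (if y = z then (1:ℤ) else 0) - 1) := by
            rw [Finset.sum_comm]
            exact Finset.sum_congr rfl fun x _ => Finset.sum_comm
        _ = ∑ x : V, ∑ y : V, ((if x = y then N else 0) - 1) := by
            exact Finset.sum_congr rfl fun x _ =>
              Finset.sum_congr rfl fun y _ => he x y
        _ = 0 := by
            simp [Finset.sum_sub_distrib, Finset.sum_ite_eq, Finset.card_univ, hN]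
    have hcolS : ∀ z : V,
        (∑ x, (2 * A x z + (if x = z then (1:ℤ) else 0) - 1)) = 0 := by
      intro z
      have := (Finset.sum_eq_zero_iff_of_nonneg
        (fun w _ => mul_self_nonneg (∑ x, (2 * A x w + (if x = w then (1:ℤ) else 0) - 1)))).mp
        hgram z (Finset.mem_univ z)
      exact mul_self_eq_zero.mp this
    have hcol : ∀ z : V, 2 * (∑ x, A x z) = N - 1 := by
      intro z
      have h := hcolS z
      rw [Finset.sum_sub_distrib, Finset.sum_add_distrib, ← Finset.mul_sum] at h
      simp [Finset.sum_ite_eq', Finset.card_univ] at h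
      linarith
    have hrow : ∀ x : V, 2 * (∑ z, A x z) = N - 1 := by
      intro x
      have := hrc x
      have := hcol x
      linarith
    -- expanded entry equations
    have he' : ∀ x y : V, x ≠ y →
        4 * (∑ z, A x z * A y z) + 2 * A x y + 2 * A y x
          - 2 * (∑ z, A x z) - 2 * (∑ z, A y z) + N - 2 = -1 := by
      intro x y hxy
      have h := he x y
      rw [sumS A x y] at h
      simp only [hxy, if_false] at h
      linarith
    -- skew symmetry of S for the in-neighbor count
    have hskew : ∀ x y : V, x ≠ y →
        ∑ z, (2 * A z x + (if x = z then (1:ℤ) else 0) - 1) *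
              (2 * A z y + (if y = z then (1:ℤ) else 0) - 1)
        = ∑ z, (2 * A x z + (if x = z then (1:ℤ) else 0) - 1) *
              (2 * A y z + (if y = z then (1:ℤ) else 0) - 1) := by
      intro x y hxy
      refine Finset.sum_congr rfl fun z _ => ?_
      have e1 : (2 * A z x + (if x = z then (1:ℤ) else 0) - 1)
          = -(2 * A x z + (if x = z then (1:ℤ) else 0) - 1) := by
        by_cases h : x = z
        · subst h; simp [hdiag x]
        · have := hpair x z h; simp [h]; linarith
      have e2 : (2 * A z y + (if y = z then (1:ℤ) else 0) - 1)
          = -(2 * A y z + (if y = z then (1:ℤ) else 0) - 1) := by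
        by_cases h : y = z
        · subst h; simp [hdiag y]
        · have := hpair y z h; simp [h]; linarith
      rw [e1, e2, neg_mul_neg]
    have hin : ∀ x y : V, x ≠ y →
        4 * (∑ z, A z x * A z y) = N - 3 := by
      intro x y hxy
      have h := hskew x y hxy
      rw [he x y] at h
      have h2 := sumS A.transpose x y
      simp only [Matrix.transpose_apply] at h2
      rw [h2] at h
      simp only [hxy, if_false] at h
      have hc1 := hcol x
      have hc2 := hcol y
      have hp := hpair x y hxy
      linarith
    refine ⟨fun x => ⟨hrow x, hcol x⟩, fun x y hxy => ⟨?_, hin x y hxy⟩⟩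
    have h := he' x y hxy
    have h1 := hrow x
    have h2 := hrow y
    have hp := hpair x y hxy
    linarith
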